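/- Let X be a zero-dimensional Hausdorff space and let C be a zero-dimensional compactification of X, i.e., C is a compact zero-dimensional Hausdorff space together with a dense topological embedding of X into C. Then X is ultraparacompact if and only if the product space X × C is ultranormal. -/

import Mathlib

open Set Topology TopologicalSpace



/-- A partition of the space `X` into (nonempty, pairwise disjoint) clopen sets. -/
def IsClopenPartition (X : Type*) [TopologicalSpace X] (P : Set (Set X)) : Prop :=
  (∀ S ∈ P, IsClopen S) ∧ (∀ S ∈ P, S.Nonempty) ∧
    (∀ S ∈ P, ∀ T ∈ P, S ≠ T → S ∩ T = ∅) ∧ ⋃₀ P = Set.univ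

/-- A space is ultraparacompact if every open cover has a refinement that is a
partition of the space into clopen sets. -/
def Ultraparacompact (X : Type*) [TopologicalSpace X] : Prop :=
  ∀ 𝒰 : Set (Set X), (∀ U ∈ 𝒰, IsOpen U) → ⋃₀ 𝒰 = Set.univ →
    ∃ P : Set (Set X), IsClopenPartition X P ∧ ∀ S ∈ P, ∃ U ∈ 𝒰, S ⊆ U

/-- A space is ultranormal if any two disjoint closed sets are separated by a clopen set. -/
def Ultranormal (X : Type*) [TopologicalSpace X] : Prop :=
  ∀ R S : Set X, IsClosed R → IsClosed S → Disjoint R S →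
    ∃ C : Set X, IsClopen C ∧ R ⊆ C ∧ S ∩ C = ∅

/-- A space is zero-dimensional if the clopen sets form a basis for the topology. -/
def ZeroDimensional (X : Type*) [TopologicalSpace X] : Prop :=
  TopologicalSpace.IsTopologicalBasis {s : Set X | IsClopen s}

lemma isClopen_partialSups {α : Type*} [TopologicalSpace α] {f : ℕ → Set α}
    (h : ∀ n, IsClopen (f n)) (n : ℕ) : IsClopen (partialSups f n) := by
  induction n with
  | zero => simpa using h 0
  | succ n ih => rw [partialSups_add_one]; exact ih.union (h (n+1))

lemma isClopen_disjointed {α : Type*} [TopologicalSpace α] {f : ℕ → Set α}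
    (h : ∀ n, IsClopen (f n)) (n : ℕ) : IsClopen (disjointed f n) := by
  cases n with
  | zero => simpa [disjointed_zero] using h 0
  | succ n => rw [disjointed_add_one]; exact (h (n+1)).diff (isClopen_partialSups h n)

lemma exists_nat_clopen_refinement {α : Type*} [TopologicalSpace α] (𝒱 : Set (Set α))
    (h𝒱 : ∀ O ∈ 𝒱, IsClopen O) (Q : Set α) (hQ : IsCompact Q) (hcov : Q ⊆ ⋃₀ 𝒱) :
    ∃ g : ℕ → Set α, (∀ n, IsClopen (g n)) ∧ (∀ n m, n ≠ m → g n ∩ g m = ∅) ∧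
      Q ⊆ ⋃ n, g n ∧ ∀ n, g n = ∅ ∨ ∃ O ∈ 𝒱, g n ⊆ O := by
  obtain ⟨t, htsub, htfin, htcov'⟩ := hQ.elim_finite_subcover_image (b := 𝒱) (c := id)
    (fun O hO => (h𝒱 O hO).isOpen) (by simpa [Set.sUnion_eq_biUnion] using hcov)
  have htcov : Q ⊆ ⋃₀ t := by simpa [Set.sUnion_eq_biUnion] using htcov'
  set l : List (Set α) := htfin.toFinset.toList with hl
  have hlmem : ∀ s ∈ l, s ∈ 𝒱 := by
    intro s hs
    rw [hl, Finset.mem_toList, Set.Finite.mem_toFinset] at hs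
    exact htsub hs
  set f : ℕ → Set α := fun n => l.getD n ∅ with hf
  have hfcases : ∀ n, f n = ∅ ∨ f n ∈ 𝒱 := by
    intro n
    by_cases hn : n < l.length
    · right
      rw [hf]
      simp only [List.getD_eq_getElem l ∅ hn]
      exact hlmem _ (List.getElem_mem hn)
    · left
      rw [hf]
      exact List.getD_eq_default l ∅ (le_of_not_gt hn)
  have hfclopen : ∀ n, IsClopen (f n) := by
    intro n
    rcases hfcases n with h | h
    · rw [h]; exact isClopen_empty
    · exact h𝒱 _ h
  refine ⟨disjointed f, isClopen_disjointed hfclopen, ?_, ?_, ?_⟩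
  · intro n m hnm
    exact Set.disjoint_iff_inter_eq_empty.mp (disjoint_disjointed f hnm)
  · rw [iUnion_disjointed]
    intro x hx
    obtain ⟨s, hs, hxs⟩ := htcov hx
    have hsl : s ∈ l := by
      rw [hl, Finset.mem_toList, Set.Finite.mem_toFinset]; exact hs
    obtain ⟨n, hn, hns⟩ := List.getElem_of_mem hsl
    exact Set.mem_iUnion.mpr ⟨n, by rw [hf]; simp only [List.getD_eq_getElem l ∅ hn, hns]; exact hxs⟩
  · intro n
    rcases hfcases n with h | h
    · left; exact Set.eq_empty_of_subset_empty (h ▸ disjointed_subset f n)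
    · right; exact ⟨f n, h, disjointed_subset f n⟩

lemma ultranormal_of_ultraparacompact {Y : Type*} [TopologicalSpace Y]
    (h : Ultraparacompact Y) : Ultranormal Y := by
  intro R S hR hS hRS
  obtain ⟨P, ⟨hPclopen, hPne, hPdisj, hPcov⟩, href⟩ := h {Rᶜ, Sᶜ}
    (by rintro U (rfl | rfl); exacts [hR.isOpen_compl, hS.isOpen_compl])
    (by simp [Set.sUnion_pair, ← Set.compl_inter, Set.disjoint_iff_inter_eq_empty.mp hRS])
  refine ⟨⋃₀ {s ∈ P | (s ∩ R).Nonempty}, ⟨?_, isOpen_sUnion fun s hs => (hPclopen s hs.1).isOpen⟩, ?_, ?_⟩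
  · have : (⋃₀ {s ∈ P | (s ∩ R).Nonempty})ᶜ = ⋃₀ {s ∈ P | ¬(s ∩ R).Nonempty} := by
      ext y
      constructor
      · intro hy
        have hyU : y ∈ ⋃₀ P := hPcov ▸ Set.mem_univ y
        obtain ⟨s, hs, hys⟩ := hyU
        refine ⟨s, ⟨hs, fun hne => hy ⟨s, ⟨hs, hne⟩, hys⟩⟩, hys⟩
      · rintro ⟨s, ⟨hs, hsR⟩, hys⟩ ⟨s', ⟨hs', hs'R⟩, hys'⟩
        have hne : s ≠ s' := fun hss => hsR (hss ▸ hs'R)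
        have := hPdisj s hs s' hs' hne
        exact absurd (Set.mem_inter hys hys') (this ▸ id)
    rw [← isOpen_compl_iff, this]
    exact isOpen_sUnion fun s hs => (hPclopen s hs.1).isOpen
  · intro y hy
    obtain ⟨s, hs, hys⟩ := hPcov ▸ Set.mem_univ y
    exact ⟨s, ⟨hs, ⟨y, hys, hy⟩⟩, hys⟩
  · rw [Set.eq_empty_iff_forall_notMem]
    rintro y ⟨hyS, s, ⟨hs, hsR⟩, hys⟩
    obtain ⟨U, hU, hsU⟩ := href s hs
    rcases hU with rfl | rfl
    · obtain ⟨z, hz1, hz2⟩ := hsR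
      exact hsU hz1 hz2
    · exact hsU hys hyS

lemma ultraparacompact_prod {X C : Type*} [TopologicalSpace X] [TopologicalSpace C]
    [CompactSpace C] (hX : ZeroDimensional X) (hC : ZeroDimensional C)
    (h : Ultraparacompact X) : Ultraparacompact (X × C) := by
  rcases isEmpty_or_nonempty X with hXe | hXne
  · intro 𝒲 _ _
    refine ⟨∅, ⟨by simp, by simp, by simp, ?_⟩, by simp⟩
    rw [Set.sUnion_empty, eq_comm, Set.univ_eq_empty_iff]
    exact IsEmpty.mk fun p => hXe.elim p.1
  intro 𝒲 hWopen hWcov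
  have basis := hX.prod hC
  -- Step A
  have stepA : ∀ x : X, ∃ V : Set X, IsClopen V ∧ x ∈ V ∧ ∃ g : ℕ → Set C,
      (∀ n, IsClopen (g n)) ∧ (∀ n m, n ≠ m → g n ∩ g m = ∅) ∧ (Set.univ : Set C) ⊆ ⋃ n, g n ∧
      ∀ n, g n = ∅ ∨ ∃ W ∈ 𝒲, V ×ˢ g n ⊆ W := by
    intro x
    have hc : ∀ c : C, ∃ A : Set X, ∃ B : Set C, IsClopen A ∧ IsClopen B ∧ x ∈ A ∧ c ∈ B ∧
        ∃ W ∈ 𝒲, A ×ˢ B ⊆ W := by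
      intro c
      have hxc : (x, c) ∈ ⋃₀ 𝒲 := hWcov ▸ Set.mem_univ _
      obtain ⟨W, hW, hxcW⟩ := hxc
      obtain ⟨b, hb, hxcb, hbW⟩ := basis.exists_subset_of_mem_open hxcW (hWopen W hW)
      obtain ⟨A, hA, B, hB, rfl⟩ := hb
      exact ⟨A, B, hA, hB, hxcb.1, hxcb.2, W, hW, hbW⟩
    choose A B hA hB hxA hcB W hWmem hWsub using hc
    obtain ⟨t, htcov⟩ := isCompact_univ.elim_finite_subcover B (fun c => (hB c).isOpen)
      (fun c _ => Set.mem_iUnion.mpr ⟨c, hcB c⟩)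
    obtain ⟨g, hg1, hg2, hg3, hg4⟩ := exists_nat_clopen_refinement ((fun c => B c) '' ↑t)
      (by rintro O ⟨c, _, rfl⟩; exact hB c) Set.univ isCompact_univ
      (by intro y hy; obtain ⟨c, hct, hyc⟩ := Set.mem_iUnion₂.mp (htcov hy)
          exact ⟨B c, ⟨c, hct, rfl⟩, hyc⟩)
    refine ⟨⋂ c ∈ t, A c, isClopen_biInter_finset (fun c _ => hA c),
      Set.mem_iInter₂.mpr fun c _ => hxA c, g, hg1, hg2, hg3, ?_⟩
    intro n
    rcases hg4 n with hn | ⟨O, ⟨c, hct, rfl⟩, hsub⟩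
    · exact Or.inl hn
    · exact Or.inr ⟨W c, hWmem c,
        Set.Subset.trans (Set.prod_mono (Set.biInter_subset_of_mem hct) hsub) (hWsub c)⟩
  choose V hVclopen hxV g hg1 hg2 hg3 hg4 using stepA
  obtain ⟨P₀, ⟨hP0clopen, hP0ne, hP0disj, hP0cov⟩, href⟩ := h (Set.range V)
    (by rintro U ⟨x, rfl⟩; exact (hVclopen x).isOpen)
    (by rw [Set.eq_univ_iff_forall]; intro y; exact ⟨V y, ⟨y, rfl⟩, hxV y⟩)
  have hxs' : ∀ s : Set X, ∃ x : X, s ∈ P₀ → s ⊆ V x := by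
    intro s
    by_cases hs : s ∈ P₀
    · obtain ⟨U, ⟨x, rfl⟩, hsU⟩ := href s hs
      exact ⟨x, fun _ => hsU⟩
    · exact ⟨hXne.some, fun h => absurd h hs⟩
  choose xs hxs using hxs'
  refine ⟨{s | s.Nonempty ∧ ∃ p ∈ P₀, ∃ n : ℕ, s = p ×ˢ g (xs p) n}, ⟨?_, ?_, ?_, ?_⟩, ?_⟩
  · rintro s ⟨-, p, hp, n, rfl⟩
    exact (hP0clopen p hp).prod (hg1 _ n)
  · rintro s ⟨hne, -⟩; exact hne
  · rintro s ⟨-, p, hp, n, rfl⟩ t ⟨-, q, hq, m, rfl⟩ hst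
    by_cases hpq : p = q
    · subst hpq
      have hnm : n ≠ m := fun hh => hst (by rw [hh])
      rw [Set.prod_inter_prod, hg2 _ n m hnm, Set.prod_empty]
    · rw [Set.prod_inter_prod, hP0disj p hp q hq hpq, Set.empty_prod]
  · rw [Set.eq_univ_iff_forall]
    rintro ⟨x, c⟩
    obtain ⟨p, hp, hxp⟩ := hP0cov ▸ Set.mem_univ x
    obtain ⟨n, hcn⟩ := Set.mem_iUnion.mp (hg3 (xs p) (Set.mem_univ c))
    exact ⟨p ×ˢ g (xs p) n, ⟨⟨(x, c), Set.mem_prod.mpr ⟨hxp, hcn⟩⟩, p, hp, n, rfl⟩,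
      Set.mem_prod.mpr ⟨hxp, hcn⟩⟩
  · rintro s ⟨hne, p, hp, n, rfl⟩
    have hgne : g (xs p) n ≠ ∅ := by
      obtain ⟨⟨y, c⟩, hy⟩ := hne
      exact fun hh => (hh ▸ hy.2 : c ∈ (∅ : Set C))
    rcases hg4 (xs p) n with h0 | ⟨W, hW, hsub⟩
    · exact absurd h0 hgne
    · exact ⟨W, hW, Set.Subset.trans (Set.prod_mono_left (hxs p hp)) hsub⟩

lemma isClopen_fiber_of_locally_constant {X β : Type*} [TopologicalSpace X] {f : X → β}
    (key : ∀ x, ∃ u, IsOpen u ∧ x ∈ u ∧ ∀ y ∈ u, f y = f x) (Q : β) :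
    IsClopen (f ⁻¹' {Q}) := by
  constructor
  · rw [← isOpen_compl_iff]
    refine isOpen_iff_forall_mem_open.mpr fun x hx => ?_
    obtain ⟨u, hu, hxu, hc⟩ := key x
    refine ⟨u, fun y hy => ?_, hu, hxu⟩
    simp only [Set.mem_compl_iff, Set.mem_preimage, Set.mem_singleton_iff] at *
    rw [hc y hy]; exact hx
  · refine isOpen_iff_forall_mem_open.mpr fun x hx => ?_
    obtain ⟨u, hu, hxu, hc⟩ := key x
    refine ⟨u, fun y hy => ?_, hu, hxu⟩
    simp only [Set.mem_preimage, Set.mem_singleton_iff] at *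
    rw [hc y hy]; exact hx

lemma ultraparacompact_of_prod_ultranormal {X C : Type*} [TopologicalSpace X]
    [TopologicalSpace C] [T2Space C] [CompactSpace C]
    (hC : ZeroDimensional C) (e : X → C) (he : Topology.IsEmbedding e)
    (hN : Ultranormal (X × C)) : Ultraparacompact X := by
  intro 𝒰 hUopen hUcov
  set 𝒱 : Set (Set C) := {O | IsClopen O ∧ ∃ U ∈ 𝒰, e ⁻¹' O ⊆ U} with h𝒱
  have h𝒱clopen : ∀ O ∈ 𝒱, IsClopen O := fun O hO => hO.1
  have hrange : Set.range e ⊆ ⋃₀ 𝒱 := by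
    rintro _ ⟨x, rfl⟩
    obtain ⟨U, hU, hxU⟩ : x ∈ ⋃₀ 𝒰 := hUcov ▸ Set.mem_univ x
    obtain ⟨Vo, hVo, hVeq⟩ := he.toIsInducing.isOpen_iff.mp (hUopen U hU)
    have hexV : e x ∈ Vo := by rw [← hVeq] at hxU; exact hxU
    obtain ⟨O, hO, heO, hOV⟩ := hC.exists_subset_of_mem_open hexV hVo
    exact ⟨O, ⟨hO, U, hU, by rw [← hVeq]; exact Set.preimage_mono hOV⟩, heO⟩
  set K := (⋃₀ 𝒱)ᶜ with hK
  have hKclosed : IsClosed K := (isOpen_sUnion fun O hO => hO.1.isOpen).isClosed_compl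
  have hRclosed : IsClosed {p : X × C | p.2 = e p.1} :=
    isClosed_eq (f := fun p : X × C => p.2) (g := fun p : X × C => e p.1)
      continuous_snd (he.continuous.comp continuous_fst)
  have hSclosed : IsClosed ((Prod.snd : X × C → C) ⁻¹' K) := hKclosed.preimage continuous_snd
  have hdisj : Disjoint {p : X × C | p.2 = e p.1} ((Prod.snd : X × C → C) ⁻¹' K) := by
    rw [Set.disjoint_left]
    rintro ⟨x, c⟩ (hc : c = e x) hcK
    exact hcK (hc ▸ hrange ⟨x, rfl⟩)
  obtain ⟨D, hD, hRD, hSD⟩ := hN _ _ hRclosed hSclosed hdisj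
  set f : X → Set C := fun x => {c | (x, c) ∈ D} with hf
  have hfclopen : ∀ x, IsClopen (f x) := fun x => hD.preimage (Continuous.prodMk_right x)
  have hfcompact : ∀ x, IsCompact (f x) := fun x => (hfclopen x).isClosed.isCompact
  have hexf : ∀ x, e x ∈ f x := fun x => hRD (show (x, e x).2 = e (x, e x).1 from rfl)
  have hfsub : ∀ x, f x ⊆ ⋃₀ 𝒱 := by
    intro x c hc
    by_contra hcK
    have h2 : ((x, c) : X × C) ∈ (Prod.snd : X × C → C) ⁻¹' K ∩ D := ⟨hcK, hc⟩
    rw [hSD] at h2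
    exact h2
  have key : ∀ x, ∃ u, IsOpen u ∧ x ∈ u ∧ ∀ y ∈ u, f y = f x := by
    intro x
    have h1 : ({x} : Set X) ×ˢ f x ⊆ D := by
      rintro ⟨a, c⟩ ⟨ha, hc⟩
      rw [Set.mem_singleton_iff] at ha; subst ha; exact hc
    obtain ⟨u, v, hu, hv, hxu, hfv, huv⟩ :=
      generalized_tube_lemma isCompact_singleton (hfcompact x) hD.isOpen h1
    have h2 : ({x} : Set X) ×ˢ (f x)ᶜ ⊆ Dᶜ := by
      rintro ⟨a, c⟩ ⟨ha, hc⟩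
      rw [Set.mem_singleton_iff] at ha; subst ha; exact hc
    obtain ⟨u', v', hu', hv', hxu', hfv', huv'⟩ :=
      generalized_tube_lemma isCompact_singleton ((hfclopen x).compl.isClosed.isCompact)
        hD.isClosed.isOpen_compl h2
    refine ⟨u ∩ u', hu.inter hu', ⟨hxu rfl, hxu' rfl⟩, ?_⟩
    intro y hy
    ext c
    constructor
    · intro hcy
      by_contra hcx
      exact huv' (Set.mk_mem_prod hy.2 (hfv' hcx)) hcy
    · intro hcx
      exact huv (Set.mk_mem_prod hy.1 (hfv hcx))
  have hfiber : ∀ Q : Set C, IsClopen (f ⁻¹' {Q}) := isClopen_fiber_of_locally_constant key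
  have hG : ∀ Q : Set C, ∃ g : ℕ → Set C, (∀ n, IsClopen (g n)) ∧
      (∀ n m, n ≠ m → g n ∩ g m = ∅) ∧ ((IsCompact Q ∧ Q ⊆ ⋃₀ 𝒱) → Q ⊆ ⋃ n, g n) ∧
      (∀ n, g n = ∅ ∨ ∃ O ∈ 𝒱, g n ⊆ O) := by
    intro Q
    by_cases hQ : IsCompact Q ∧ Q ⊆ ⋃₀ 𝒱
    · obtain ⟨g, h1, h2, h3, h4⟩ := exists_nat_clopen_refinement 𝒱 h𝒱clopen Q hQ.1 hQ.2
      exact ⟨g, h1, h2, fun _ => h3, h4⟩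
    · exact ⟨fun _ => ∅, fun _ => isClopen_empty, fun _ _ _ => by simp,
        fun hh => absurd hh hQ, fun _ => Or.inl rfl⟩
  choose G hG1 hG2 hG3 hG4 using hG
  refine ⟨{s | s.Nonempty ∧ ∃ x n, s = f ⁻¹' {f x} ∩ e ⁻¹' (G (f x) n)}, ⟨?_, ?_, ?_, ?_⟩, ?_⟩
  · rintro s ⟨-, x, n, rfl⟩
    exact (hfiber (f x)).inter ((hG1 (f x) n).preimage he.continuous)
  · rintro s ⟨hne, -⟩; exact hne
  · rintro s ⟨-, x, n, rfl⟩ t ⟨-, y, m, rfl⟩ hst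
    by_cases hxy : f x = f y
    · have hnm : n ≠ m := fun hh => hst (by rw [hxy, hh])
      rw [Set.eq_empty_iff_forall_notMem]
      rintro z ⟨⟨-, hz1⟩, -, hz2⟩
      rw [Set.mem_preimage] at hz1 hz2
      rw [hxy] at hz1
      have hmem : e z ∈ G (f y) n ∩ G (f y) m := ⟨hz1, hz2⟩
      rw [hG2 (f y) n m hnm] at hmem
      exact hmem
    · rw [Set.eq_empty_iff_forall_notMem]
      rintro z ⟨⟨hz1, -⟩, hz2, -⟩
      rw [Set.mem_preimage, Set.mem_singleton_iff] at hz1 hz2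
      exact hxy (hz1.symm.trans hz2)
  · rw [Set.eq_univ_iff_forall]
    intro x
    have hQ : f x ⊆ ⋃ n, G (f x) n := hG3 (f x) ⟨hfcompact x, hfsub x⟩
    obtain ⟨n, hn⟩ := Set.mem_iUnion.mp (hQ (hexf x))
    exact ⟨f ⁻¹' {f x} ∩ e ⁻¹' (G (f x) n), ⟨⟨x, rfl, hn⟩, x, n, rfl⟩, rfl, hn⟩
  · rintro s ⟨hne, x, n, rfl⟩
    have hGne : G (f x) n ≠ ∅ := by
      obtain ⟨y, -, hy2⟩ := hne
      exact fun hh => (hh ▸ hy2 : e y ∈ (∅ : Set C))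
    rcases hG4 (f x) n with h0 | ⟨O, hO, hsub⟩
    · exact absurd h0 hGne
    · obtain ⟨-, U, hU, hOU⟩ := hO
      exact ⟨U, hU, fun z hz => hOU (hsub hz.2)⟩

/-- If `C` is a zero-dimensional compactification of a zero-dimensional Hausdorff space `X`
(i.e. `C` is compact Hausdorff zero-dimensional and `X` embeds densely into `C`), then
`X` is ultraparacompact iff `X × C` is ultranormal. -/
theorem ultraparacompact_iff_prod_compactification_ultranormal (X C : Type*)
    [TopologicalSpace X] [T2Space X] (hX : ZeroDimensional X)
    [TopologicalSpace C] [T2Space C] [CompactSpace C] (hC : ZeroDimensional C)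
    (e : X → C) (he : Topology.IsEmbedding e) (hdense : DenseRange e) :
    Ultraparacompact X ↔ Ultranormal (X × C) := by
  constructor
  · intro h
    exact ultranormal_of_ultraparacompact (ultraparacompact_prod hX hC h)
  · intro h
    exact ultraparacompact_of_prod_ultranormal hC e he h
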